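/- Let n ≥ 1 and let H_1, ..., H_n and A_1, ..., A_n be finite nonempty sets, with H = H_1 × ... × H_n and A = A_1 × ... × A_n. Regard joint policies as elements of the real vector space of functions H × A → ℝ. A joint policy π is factorized if there exist functions π_i : H_i → Δ(A_i) with π(h)(a) = Π_{i=1}^n π_i(h_i)(a_i) for all h ∈ H, a ∈ A. A joint policy π is a shared-randomness policy if there exist a finite nonempty set X, a probability distribution q ∈ Δ(X), and functions π_i : X × H_i → Δ(A_i) such that π(h)(a) = Σ_{x∈X} q(x) Π_{i=1}^n π_i(x, h_i)(a_i) for all h, a. Then the set of shared-randomness policies equals the convex hull (in the function space ℝ^{H×A}) of the set of factorized policies. -/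
import Mathlib


/-- A probability mass function on a finite type `Y`. -/
def IsPMF {Y : Type*} [Fintype Y] (p : Y → ℝ) : Prop :=
  (∀ y, 0 ≤ p y) ∧ ∑ y, p y = 1

/-- for `n ≥ 1` and finite nonempty sets `H i`, `A i`, the set of
shared-randomness joint policies (regarded as elements of the real vector space
`ℝ^{H×A}` of functions `(∀ i, H i) × (∀ i, A i) → ℝ`) equals the convex hull of the
set of factorized joint policies. -/
theorem sharedRandomness_eq_convexHull_factorized (n : ℕ) (hn : 1 ≤ n)
    (H A : Fin n → Type) [∀ i, Fintype (H i)] [∀ i, Nonempty (H i)]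
    [∀ i, Fintype (A i)] [∀ i, Nonempty (A i)] :
    {π : ((∀ i, H i) × (∀ i, A i)) → ℝ |
      ∃ (X : Type) (_ : Fintype X) (_ : Nonempty X) (q : X → ℝ)
        (p : ∀ i, X → H i → A i → ℝ),
        IsPMF q ∧ (∀ i x h, IsPMF (p i x h)) ∧
        ∀ z : (∀ i, H i) × (∀ i, A i), π z = ∑ x, q x * ∏ i, p i x (z.1 i) (z.2 i)} =
    convexHull ℝ
      {π : ((∀ i, H i) × (∀ i, A i)) → ℝ |
        ∃ p : ∀ i, H i → A i → ℝ, (∀ i h, IsPMF (p i h)) ∧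
          ∀ z : (∀ i, H i) × (∀ i, A i), π z = ∏ i, p i (z.1 i) (z.2 i)} := by
  apply Set.Subset.antisymm
  · -- shared ⊆ convexHull factorized
    rintro π ⟨X, _, _, q, p, hq, hp, hπ⟩
    have key : π = Finset.univ.centerMass q
        (fun x => fun z : (∀ i, H i) × (∀ i, A i) => ∏ i, p i x (z.1 i) (z.2 i)) := by
      rw [Finset.centerMass, hq.2, inv_one, one_smul]
      funext z
      rw [hπ z]
      simp [Finset.sum_apply]
    rw [key]
    apply Finset.centerMass_mem_convexHull
    · intro x _; exact hq.1 x
    · rw [hq.2]; norm_num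
    · intro x _
      exact ⟨fun i => p i x, fun i h => hp i x h, fun z => rfl⟩
  · -- convexHull factorized ⊆ shared
    apply convexHull_min
    · rintro π ⟨p, hp, hπ⟩
      refine ⟨Unit, inferInstance, inferInstance, fun _ => 1, fun i _ => p i,
        ⟨fun _ => zero_le_one, by simp⟩, fun i _ h => hp i h, fun z => by simp [hπ z]⟩
    · rintro π₁ ⟨X₁, _, _, q₁, p₁, hq₁, hp₁, hπ₁⟩ π₂ ⟨X₂, _, _, q₂, p₂, hq₂, hp₂, hπ₂⟩
        a b ha hb hab
      refine ⟨X₁ ⊕ X₂, inferInstance, inferInstance,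
        Sum.elim (fun x => a * q₁ x) (fun x => b * q₂ x),
        fun i => Sum.elim (p₁ i) (p₂ i), ⟨?_, ?_⟩, ?_, ?_⟩
      · rintro (x | x)
        · exact mul_nonneg ha (hq₁.1 x)
        · exact mul_nonneg hb (hq₂.1 x)
      · rw [Fintype.sum_sum_type]
        simp only [Sum.elim_inl, Sum.elim_inr, ← Finset.mul_sum, hq₁.2, hq₂.2]
        simpa using hab
      · rintro i (x | x) h
        · exact hp₁ i x h
        · exact hp₂ i x h
      · intro z
        rw [Fintype.sum_sum_type]
        simp only [Sum.elim_inl, Sum.elim_inr, mul_assoc, ← Finset.mul_sum]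
        rw [← hπ₁ z, ← hπ₂ z]
        simp
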